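/- The dual graph of the Farey graph is connected: any two triangles of F can be joined by a finite sequence of triangles in which consecutive triangles share a common edge. -/

import Mathlib

/-- Adjacency in the Farey graph on `ℚ ∪ {∞}`, where `∞` (the vertex `none`) is
regarded as `1/0`: two reduced fractions `p/q` and `r/s` are adjacent iff `|ps - rq| = 1`. -/
def fareyAdj : Option ℚ → Option ℚ → Prop
  | some p, some q => |p.num * (q.den : ℤ) - q.num * (p.den : ℤ)| = 1
  | some p, none => p.den = 1
  | none, some q => q.den = 1
  | none, none => False

/-- The Farey graph: vertices are `ℚ ∪ {∞}` (modelled as `Option ℚ`, with `none = ∞ = 1/0`),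
and `p/q`, `r/s` (in lowest terms) are adjacent iff `|ps - rq| = 1`. -/
def fareyGraph : SimpleGraph (Option ℚ) where
  Adj x y := fareyAdj x y
  symm := ⟨by
    rintro (_ | p) (_ | q) h <;> simp_all [fareyAdj, abs_sub_comm]⟩
  loopless := ⟨by
    rintro (_ | p) h
    · exact h
    · simp [fareyAdj] at h⟩

/-- A triangle of the Farey graph: a set of three pairwise adjacent vertices. -/
def IsFareyTriangle (t : Finset (Option ℚ)) : Prop :=
  t.card = 3 ∧ ∀ x ∈ t, ∀ y ∈ t, x ≠ y → fareyGraph.Adj x y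

/-- The dual graph of the Farey graph: vertices are the triangles of the Farey graph,
two triangles being adjacent iff they share exactly two vertices (a common edge). -/
def fareyDual : SimpleGraph {t : Finset (Option ℚ) // IsFareyTriangle t} where
  Adj s t := s ≠ t ∧ (s.1 ∩ t.1).card = 2
  symm := ⟨by
    rintro s t ⟨h1, h2⟩
    exact ⟨h1.symm, by rwa [Finset.inter_comm]⟩⟩
  loopless := ⟨fun s h => h.1 rfl⟩

namespace FareyAux

/-- numerator of a vertex -/
def vnum : Option ℚ → ℤ
  | none => 1
  | some q => q.num

/-- denominator of a vertex -/
def vden : Option ℚ → ℕ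
  | none => 0
  | some q => q.den

lemma adj_iff (x y : Option ℚ) :
    fareyGraph.Adj x y ↔ |vnum x * (vden y : ℤ) - vnum y * (vden x : ℤ)| = 1 := by
  rcases x with _ | p <;> rcases y with _ | q <;>
    simp [fareyGraph, fareyAdj, vnum, vden] <;> omega

lemma vertex_ext {x y : Option ℚ} (h1 : vnum x = vnum y) (h2 : vden x = vden y) : x = y := by
  rcases x with _ | p <;> rcases y with _ | q <;> simp_all [vnum, vden]
  · exact q.den_nz h2.symm
  · exact Rat.ext h1 h2

/-- construct a vertex from a numerator/denominator pair -/
def mkV (a b : ℤ) (hb : 0 ≤ b) (h : Int.gcd a b = 1) : Option ℚ :=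
  if hb0 : b = 0 then none
  else some (Rat.mk' a b.toNat (by omega) (by
    have : b.toNat = b.natAbs := by omega
    rw [this]; exact h))

lemma vden_mkV (a b : ℤ) (hb : 0 ≤ b) (h : Int.gcd a b = 1) :
    (vden (mkV a b hb h) : ℤ) = b := by
  unfold mkV
  split
  · simp [vden]; omega
  · simp [vden, Rat.mk']; omega

lemma adj_mkV (a b : ℤ) (hb : 0 ≤ b) (h : Int.gcd a b = 1) (y : Option ℚ) :
    fareyGraph.Adj (mkV a b hb h) y ↔ |a * (vden y : ℤ) - vnum y * b| = 1 := by
  unfold mkV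
  split
  case isTrue hb0 =>
    subst hb0
    have ha : |a| = 1 := by
      have := Int.abs_eq_natAbs a
      simp at h
      omega
    rw [adj_iff]
    rcases y with _ | q <;>
      simp [vnum, vden, mul_zero, sub_zero, one_mul, abs_mul, ha]
  case isFalse hb0 =>
    rw [adj_iff]
    simp only [vnum, vden, Rat.mk']
    have : (b.toNat : ℤ) = b := by omega
    rw [this]


lemma adj_some_iff (p q : ℚ) :
    fareyGraph.Adj (some p) (some q) ↔ |p.num * (q.den:ℤ) - q.num * (p.den:ℤ)| = 1 :=
  Iff.rfl

lemma pair_card_le (u v : Option ℚ) : ({u, v} : Finset (Option ℚ)).card ≤ 2 :=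
  (Finset.card_insert_le _ _).trans (by simp)

lemma card3_ne {x y z : Option ℚ} (h : ({x, y, z} : Finset (Option ℚ)).card = 3) :
    x ≠ y ∧ x ≠ z ∧ y ≠ z := by
  refine ⟨?_, ?_, ?_⟩ <;> rintro rfl
  · have := (Finset.card_le_card (show ({x, x, z} : Finset (Option ℚ)) ⊆ {x, z} by
      intro u hu; simp at hu ⊢; tauto)).trans (pair_card_le x z)
    omega
  · have := (Finset.card_le_card (show ({x, y, x} : Finset (Option ℚ)) ⊆ {x, y} by
      intro u hu; simp at hu ⊢; tauto)).trans (pair_card_le x y)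
    omega
  · have := (Finset.card_le_card (show ({x, y, y} : Finset (Option ℚ)) ⊆ {x, y} by
      intro u hu; simp at hu ⊢; tauto)).trans (pair_card_le x y)
    omega

lemma mediant_norm (p q r : ℚ)
    (h1 : p.num = q.num + r.num) (h2 : (p.den:ℤ) = q.den + r.den) :
    ∃ a b c : ℚ, ({some a, some b, some c} : Finset (Option ℚ)) = {some p, some q, some r} ∧
      a.num = b.num + c.num ∧ (a.den:ℤ) = b.den + c.den ∧ c.den ≤ b.den := by
  rcases le_total r.den q.den with h | h
  · exact ⟨p, q, r, rfl, h1, h2, h⟩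
  · refine ⟨p, r, q, ?_, by omega, by omega, h⟩
    rw [Finset.pair_comm]

lemma mediant (p q r : ℚ) (hpq : fareyGraph.Adj (some p) (some q))
    (hpr : fareyGraph.Adj (some p) (some r)) (hqr : fareyGraph.Adj (some q) (some r)) :
    ∃ a b c : ℚ, ({some a, some b, some c} : Finset (Option ℚ)) = {some p, some q, some r} ∧
      a.num = b.num + c.num ∧ (a.den:ℤ) = b.den + c.den ∧ c.den ≤ b.den := by
  set D : ℤ := q.num * r.den - r.num * q.den with hD
  set A : ℤ := p.num * r.den - r.num * p.den with hA
  set B : ℤ := q.num * p.den - p.num * q.den with hB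
  have hDa : |D| = 1 := (adj_some_iff q r).mp hqr
  have hAa : |A| = 1 := (adj_some_iff p r).mp hpr
  have hBa : |B| = 1 := by
    have := (adj_some_iff p q).mp hpq
    rw [← abs_neg]; convert this using 2; ring
  have key1 : D * p.num = A * q.num + B * r.num := by rw [hD, hA, hB]; ring
  have key2 : D * (p.den:ℤ) = A * (q.den:ℤ) + B * (r.den:ℤ) := by rw [hD, hA, hB]; ring
  have hD2 : D * D = 1 := by rcases abs_eq (by norm_num : (0:ℤ) ≤ 1) |>.mp hDa with h | h <;>
    rw [h] <;> norm_num
  set a : ℤ := D * A with ha'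
  set b : ℤ := D * B with hb'
  have hp1 : p.num = a * q.num + b * r.num := by
    calc p.num = (D * D) * p.num := by rw [hD2]; ring
      _ = D * (D * p.num) := by ring
      _ = D * (A * q.num + B * r.num) := by rw [key1]
      _ = a * q.num + b * r.num := by rw [ha', hb']; ring
  have hp2 : (p.den:ℤ) = a * q.den + b * r.den := by
    calc (p.den:ℤ) = (D * D) * p.den := by rw [hD2]; ring
      _ = D * (D * (p.den:ℤ)) := by ring
      _ = D * (A * q.den + B * r.den) := by rw [key2]
      _ = a * q.den + b * r.den := by rw [ha', hb']; ring
  have hav : a = 1 ∨ a = -1 := by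
    rcases abs_eq (by norm_num : (0:ℤ) ≤ 1) |>.mp hDa with h | h <;>
      rcases abs_eq (by norm_num : (0:ℤ) ≤ 1) |>.mp hAa with h' | h' <;>
      rw [ha', h, h'] <;> norm_num
  have hbv : b = 1 ∨ b = -1 := by
    rcases abs_eq (by norm_num : (0:ℤ) ≤ 1) |>.mp hDa with h | h <;>
      rcases abs_eq (by norm_num : (0:ℤ) ≤ 1) |>.mp hBa with h' | h' <;>
      rw [hb', h, h'] <;> norm_num
  have hpd : 0 < p.den := p.pos
  have hqd : 0 < q.den := q.pos
  have hrd : 0 < r.den := r.pos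
  rcases hav with ha1 | ha1 <;> rcases hbv with hb1 | hb1 <;> rw [ha1, hb1] at hp1 hp2
  · exact mediant_norm p q r (by omega) (by omega)
  · -- p = q - r, i.e. q = p + r
    obtain ⟨x, y, z, hs, h⟩ := mediant_norm q p r (by omega) (by omega)
    refine ⟨x, y, z, ?_, h⟩
    rw [hs]
    ext u; simp; tauto
  · -- p = -q + r, i.e. r = p + q
    obtain ⟨x, y, z, hs, h⟩ := mediant_norm r p q (by omega) (by omega)
    refine ⟨x, y, z, ?_, h⟩
    rw [hs]
    ext u; simp; tauto
  · exfalso; omega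

/-- total weight (sum of denominators) of a triangle -/
def wt (t : Finset (Option ℚ)) : ℕ := ∑ v ∈ t, vden v

lemma vden_some (q : ℚ) : vden (some q) = q.den := rfl

lemma wt_triple {x y z : Option ℚ} (hxy : x ≠ y) (hxz : x ≠ z) (hyz : y ≠ z) :
    wt {x, y, z} = vden x + (vden y + vden z) := by
  unfold wt
  rw [Finset.sum_insert (by simp [hxy, hxz]), Finset.sum_insert (by simp [hyz]),
    Finset.sum_singleton]

lemma step (p q r : ℚ) (hT : IsFareyTriangle {some p, some q, some r})
    (h1 : p.num = q.num + r.num) (h2 : (p.den:ℤ) = q.den + r.den) (h3 : r.den ≤ q.den) :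
    ∃ (t' : Finset (Option ℚ)) (ht' : IsFareyTriangle t'),
      fareyDual.Adj ⟨_, hT⟩ ⟨t', ht'⟩ ∧ wt t' < wt {some p, some q, some r} := by
  obtain ⟨hpq, hpr, hqr⟩ := card3_ne hT.1
  have hqradj : fareyGraph.Adj (some q) (some r) :=
    hT.2 _ (by simp) _ (by simp) hqr
  have hdet : |q.num * (r.den:ℤ) - r.num * (q.den:ℤ)| = 1 := (adj_some_iff q r).mp hqradj
  have hb : (0:ℤ) ≤ (q.den:ℤ) - r.den := by omega
  have hcop : Int.gcd (q.num - r.num) ((q.den:ℤ) - r.den) = 1 := by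
    set g := Int.gcd (q.num - r.num) ((q.den:ℤ) - r.den) with hg
    have hd1 : (g:ℤ) ∣ q.num - r.num := Int.gcd_dvd_left _ _
    have hd2 : (g:ℤ) ∣ (q.den:ℤ) - r.den := Int.gcd_dvd_right _ _
    have hdd : (g:ℤ) ∣ q.num * (r.den:ℤ) - r.num * (q.den:ℤ) := by
      have := dvd_sub (hd1.mul_right (q.den:ℤ)) (hd2.mul_left q.num)
      rw [show q.num * (r.den:ℤ) - r.num * (q.den:ℤ) = (q.num - r.num) * (q.den:ℤ) - q.num * ((q.den:ℤ) - r.den) by ring]; exact this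
    have : (g:ℤ) ∣ 1 := by
      rcases abs_eq (by norm_num : (0:ℤ) ≤ 1) |>.mp hdet with h | h
      · rwa [h] at hdd
      · rw [h] at hdd; exact (dvd_neg).mp hdd
    have := Int.le_of_dvd (by norm_num) this
    have : 0 < g := by
      rcases Nat.eq_zero_or_pos g with h0 | h0
      · exfalso
        obtain ⟨e1, e2⟩ := Int.gcd_eq_zero_iff.mp (hg ▸ h0)
        have hn : q.num = r.num := by omega
        have hdq : (q.den:ℤ) = r.den := by omega
        rw [hn, hdq, sub_self, abs_zero] at hdet
        exact one_ne_zero hdet.symm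
      · exact h0
    omega
  set w := mkV (q.num - r.num) ((q.den:ℤ) - r.den) hb hcop with hw
  have hvdenw : (vden w : ℤ) = (q.den:ℤ) - r.den := vden_mkV _ _ _ _
  have hwadjq : fareyGraph.Adj w (some q) := by
    rw [hw, adj_mkV]
    simp only [vnum, vden]
    rw [show (q.num - r.num) * (q.den:ℤ) - q.num * ((q.den:ℤ) - r.den)
        = q.num * (r.den:ℤ) - r.num * (q.den:ℤ) from by ring]
    exact hdet
  have hwadjr : fareyGraph.Adj w (some r) := by
    rw [hw, adj_mkV]
    simp only [vnum, vden]
    rw [show (q.num - r.num) * (r.den:ℤ) - r.num * ((q.den:ℤ) - r.den)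
        = q.num * (r.den:ℤ) - r.num * (q.den:ℤ) from by ring]
    exact hdet
  have hwq : w ≠ some q := hwadjq.ne
  have hwr : w ≠ some r := hwadjr.ne
  have hrpos : 0 < r.den := r.pos
  have hpw : some p ≠ w := by
    intro h
    rw [← h] at hvdenw
    simp only [vden_some] at hvdenw
    omega
  refine ⟨{w, some q, some r}, ⟨Finset.card_eq_three.mpr ⟨w, some q, some r, hwq, hwr, hqr, rfl⟩,
    ?_⟩, (show _ ∧ _ from ⟨?_, ?_⟩), ?_⟩
  · intro x hx y hy hne
    simp only [Finset.mem_insert, Finset.mem_singleton] at hx hy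
    rcases hx with rfl | rfl | rfl <;> rcases hy with rfl | rfl | rfl <;>
      first
        | exact absurd rfl hne
        | exact hwadjq
        | exact hwadjq.symm
        | exact hwadjr
        | exact hwadjr.symm
        | exact hqradj
        | exact hqradj.symm
  · intro h
    have hTT : ({some p, some q, some r} : Finset (Option ℚ)) = {w, some q, some r} :=
      congrArg Subtype.val h
    have : some p ∈ ({w, some q, some r} : Finset (Option ℚ)) := by
      rw [← hTT]; simp
    simp only [Finset.mem_insert, Finset.mem_singleton] at this
    rcases this with h' | h' | h'
    · exact hpw h'
    · exact hpq h'
    · exact hpr h'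
  · have : ({some p, some q, some r} : Finset (Option ℚ)) ∩ {w, some q, some r}
        = {some q, some r} := by
      ext u
      simp only [Finset.mem_inter, Finset.mem_insert, Finset.mem_singleton]
      constructor
      · rintro ⟨h1' | h1' | h1', h2' | h2' | h2'⟩ <;> subst h1' <;> simp_all
      · rintro (rfl | rfl) <;> simp
    rw [this]
    exact Finset.card_pair hqr
  · rw [wt_triple hwq hwr hqr, wt_triple hpq hpr hqr]
    simp only [vden_some]
    omega

/-- the triangle `{∞, k, k+1}` -/
def triK (k : ℤ) : Finset (Option ℚ) := {none, some ((k:ℤ):ℚ), some (((k+1):ℤ):ℚ)}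

lemma int_cast_ne {k l : ℤ} (h : k ≠ l) : ((k:ℤ):ℚ) ≠ ((l:ℤ):ℚ) := by exact_mod_cast h

lemma adj_none_int (k : ℤ) : fareyGraph.Adj none (some ((k:ℤ):ℚ)) := by
  simp [fareyGraph, fareyAdj]

lemma adj_int_int {k l : ℤ} (h : |k - l| = 1) :
    fareyGraph.Adj (some ((k:ℤ):ℚ)) (some ((l:ℤ):ℚ)) := by
  simp only [fareyGraph]
  show fareyAdj _ _
  simp only [fareyAdj, Rat.num_intCast, Rat.den_intCast]
  simpa using h

lemma isTri_triK (k : ℤ) : IsFareyTriangle (triK k) := by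
  have h01 : (none : Option ℚ) ≠ some ((k:ℤ):ℚ) := by simp
  have h02 : (none : Option ℚ) ≠ some (((k+1):ℤ):ℚ) := by simp
  have h12 : (some ((k:ℤ):ℚ) : Option ℚ) ≠ some (((k+1):ℤ):ℚ) := by
    simp only [ne_eq, Option.some.injEq]
    exact int_cast_ne (by omega)
  constructor
  · exact Finset.card_eq_three.mpr ⟨_, _, _, h01, h02, h12, rfl⟩
  · intro x hx y hy hne
    simp only [triK, Finset.mem_insert, Finset.mem_singleton] at hx hy
    have a1 := adj_none_int k
    have a2 := adj_none_int (k+1)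
    have a3 := adj_int_int (show |k - (k+1)| = 1 by
      rw [show k - (k+1) = -1 by omega]; norm_num)
    rcases hx with rfl | rfl | rfl <;> rcases hy with rfl | rfl | rfl <;>
      first
        | exact absurd rfl hne
        | exact a1
        | exact a1.symm
        | exact a2
        | exact a2.symm
        | exact a3
        | exact a3.symm

lemma adj_triK (k l : ℤ) (hkl : l = k + 1) :
    fareyDual.Adj ⟨triK l, isTri_triK l⟩ ⟨triK k, isTri_triK k⟩ := by
  subst hkl
  have e1 : ((k:ℤ):ℚ) ≠ (((k+1):ℤ):ℚ) := int_cast_ne (by omega)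
  have e2 : ((k:ℤ):ℚ) ≠ (((k+2):ℤ):ℚ) := int_cast_ne (by omega)
  have e3 : (((k+1):ℤ):ℚ) ≠ (((k+2):ℤ):ℚ) := int_cast_ne (by omega)
  refine And.intro ?_ ?_
  · intro h
    have hTT : triK (k+1) = triK k := congrArg Subtype.val h
    have : (some (((k+2):ℤ):ℚ) : Option ℚ) ∈ triK (k+1) := by
      simp only [triK]
      have : ((k+1)+1 : ℤ) = k + 2 := by omega
      rw [this]
      simp
    rw [hTT] at this
    simp only [triK, Finset.mem_insert, Finset.mem_singleton, Option.some.injEq] at this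
    rcases this with h' | h' | h'
    · exact absurd h' (by simp)
    · exact e2 h'.symm
    · exact e3 h'.symm
  · have : triK (k+1) ∩ triK k = {none, some (((k+1):ℤ):ℚ)} := by
      have hk2 : ((k+1)+1 : ℤ) = k + 2 := by omega
      ext u
      simp only [triK, hk2, Finset.mem_inter, Finset.mem_insert, Finset.mem_singleton]
      constructor
      · rintro ⟨h1' | h1' | h1', h2' | h2' | h2'⟩ <;> simp_all
      · rintro (rfl | rfl) <;> simp
    rw [this]
    exact Finset.card_pair (by simp)

lemma reach_triK (k : ℤ) :
    fareyDual.Reachable ⟨triK k, isTri_triK k⟩ ⟨triK 0, isTri_triK 0⟩ := by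
  induction k using Int.induction_on with
  | zero => exact SimpleGraph.Reachable.refl _
  | succ i ih => exact (adj_triK i (i+1) rfl).reachable.trans ih
  | pred i ih => exact ((adj_triK (-i-1) (-i) (by ring)).symm.reachable).trans ih

lemma tri_none {t : Finset (Option ℚ)} (ht : IsFareyTriangle t) (h0 : none ∈ t) :
    ∃ k : ℤ, t = triK k := by
  have hc : (t.erase none).card = 2 := by rw [Finset.card_erase_of_mem h0, ht.1]
  obtain ⟨a, b, hab, he⟩ := Finset.card_eq_two.mp hc
  have hat' : a ∈ t.erase none := he ▸ Finset.mem_insert_self a {b}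
  have hbt' : b ∈ t.erase none := he ▸ (Finset.mem_insert_of_mem (Finset.mem_singleton_self b))
  have hat : a ∈ t := (Finset.mem_erase.mp hat').2
  have hbt : b ∈ t := (Finset.mem_erase.mp hbt').2
  have ha0 : a ≠ none := (Finset.mem_erase.mp hat').1
  have hb0 : b ≠ none := (Finset.mem_erase.mp hbt').1
  obtain ⟨m, rfl⟩ := Option.ne_none_iff_exists'.mp ha0
  obtain ⟨n, rfl⟩ := Option.ne_none_iff_exists'.mp hb0
  have hteq : t = {none, some m, some n} := by
    rw [← Finset.insert_erase h0, he]
  have hm1 : m.den = 1 := ht.2 _ h0 _ hat (by simp)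
  have hn1 : n.den = 1 := ht.2 _ h0 _ hbt (by simp)
  have hmn : fareyGraph.Adj (some m) (some n) := ht.2 _ hat _ hbt hab
  have hdet : |m.num - n.num| = 1 := by
    have := (adj_some_iff m n).mp hmn
    rw [hm1, hn1] at this
    simpa using this
  have hm : ((m.num:ℤ):ℚ) = m := by
    rw [← Rat.num_div_den m, hm1]
    norm_num
  have hn : ((n.num:ℤ):ℚ) = n := by
    rw [← Rat.num_div_den n, hn1]
    norm_num
  rcases abs_eq (by norm_num : (0:ℤ) ≤ 1) |>.mp hdet with h | h
  · -- m.num = n.num + 1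
    refine ⟨n.num, ?_⟩
    rw [hteq]
    unfold triK
    rw [hn, show ((n.num + 1 : ℤ):ℚ) = m from by
      rw [show (n.num + 1 : ℤ) = m.num by omega, hm]]
    rw [Finset.pair_comm (some m) (some n)]
  · -- n.num = m.num + 1
    refine ⟨m.num, ?_⟩
    rw [hteq]
    unfold triK
    rw [hm, show ((m.num + 1 : ℤ):ℚ) = n from by
      rw [show (m.num + 1 : ℤ) = n.num by omega, hn]]

lemma reach_all : ∀ N (t : Finset (Option ℚ)) (ht : IsFareyTriangle t), wt t ≤ N →
    fareyDual.Reachable ⟨t, ht⟩ ⟨triK 0, isTri_triK 0⟩ := by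
  intro N
  induction N using Nat.strong_induction_on with
  | _ N ih =>
    intro t ht hwt
    by_cases h0 : none ∈ t
    · obtain ⟨k, rfl⟩ := tri_none ht h0
      exact reach_triK k
    · obtain ⟨x, y, z, hxy, hxz, hyz, rfl⟩ := Finset.card_eq_three.mp ht.1
      have hx : x ≠ none := fun h => h0 (by simp [h])
      have hy : y ≠ none := fun h => h0 (by simp [h])
      have hz : z ≠ none := fun h => h0 (by simp [h])
      obtain ⟨p, rfl⟩ := Option.ne_none_iff_exists'.mp hx
      obtain ⟨q, rfl⟩ := Option.ne_none_iff_exists'.mp hy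
      obtain ⟨r, rfl⟩ := Option.ne_none_iff_exists'.mp hz
      have hpq := ht.2 _ (by simp) _ (by simp) hxy
      have hpr := ht.2 _ (by simp) _ (by simp) hxz
      have hqr := ht.2 _ (by simp) _ (by simp) hyz
      obtain ⟨a, b, c, hset, h1, h2, h3⟩ := mediant p q r hpq hpr hqr
      have hT2 : IsFareyTriangle {some a, some b, some c} := by rw [hset]; exact ht
      obtain ⟨t', ht', hadj, hlt⟩ := step a b c hT2 h1 h2 h3
      have hsub : (⟨{some a, some b, some c}, hT2⟩ : {t // IsFareyTriangle t})
          = ⟨{some p, some q, some r}, ht⟩ := Subtype.ext hset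
      rw [hsub] at hadj
      have hlt' : wt t' < wt {some p, some q, some r} := by rw [← hset]; exact hlt
      exact hadj.reachable.trans (ih (wt t') (by omega) t' ht' le_rfl)

end FareyAux

/-- **The dual graph of the Farey graph is connected:** any two triangles of the Farey
graph are joined by a finite sequence of triangles in which consecutive triangles
share a common edge. -/
theorem fareyDual_connected : fareyDual.Connected := by
  have hne : Nonempty {t : Finset (Option ℚ) // IsFareyTriangle t} :=
    ⟨⟨FareyAux.triK 0, FareyAux.isTri_triK 0⟩⟩
  constructor
  intro u v
  obtain ⟨t, ht⟩ := u
  obtain ⟨s, hs⟩ := v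
  exact (FareyAux.reach_all (FareyAux.wt t) t ht le_rfl).trans
    (FareyAux.reach_all (FareyAux.wt s) s hs le_rfl).symm
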